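/- For all n ≥ 1, the iterated adjoint action satisfies ad_V^n(W) = -(n-1)·y^{n-2}·p^{(n)}(z)·V + y^{n-1}·p^{(n+1)}(z)·H, where ad_V(X) = [V,X]. -/

import Mathlib

open Polynomial

set_option synthInstance.maxHeartbeats 1000000
set_option maxHeartbeats 1000000

noncomputable section

/-- Coordinate ring of the Danielewski surface `x y = p(z)`. -/
abbrev DS (p : Polynomial ℂ) : Type :=
  MvPolynomial (Fin 3) ℂ ⧸
    Ideal.span ({MvPolynomial.X 0 * MvPolynomial.X 1 -
      Polynomial.aeval (MvPolynomial.X 2) p} : Set (MvPolynomial (Fin 3) ℂ))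

def dsX (p : Polynomial ℂ) : DS p := Ideal.Quotient.mk _ (MvPolynomial.X 0)
def dsY (p : Polynomial ℂ) : DS p := Ideal.Quotient.mk _ (MvPolynomial.X 1)
def dsZ (p : Polynomial ℂ) : DS p := Ideal.Quotient.mk _ (MvPolynomial.X 2)

lemma ds_adjoin (p : Polynomial ℂ) :
    Algebra.adjoin ℂ ({dsX p, dsY p, dsZ p} : Set (DS p)) = ⊤ := by
  have h1 : ({dsX p, dsY p, dsZ p} : Set (DS p)) =
      (Ideal.Quotient.mkₐ ℂ _) '' Set.range (MvPolynomial.X (R := ℂ) (σ := Fin 3)) := by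
    ext a
    constructor
    · rintro (rfl | rfl | rfl)
      exacts [⟨_, ⟨0, rfl⟩, rfl⟩, ⟨_, ⟨1, rfl⟩, rfl⟩, ⟨_, ⟨2, rfl⟩, rfl⟩]
    · rintro ⟨_, ⟨i, rfl⟩, rfl⟩
      fin_cases i
      · exact Or.inl rfl
      · exact Or.inr (Or.inl rfl)
      · exact Or.inr (Or.inr rfl)
  rw [h1, ← AlgHom.map_adjoin, MvPolynomial.adjoin_range_X, Algebra.map_top]
  exact (AlgHom.range_eq_top _).2 (Ideal.Quotient.mkₐ_surjective ℂ _)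

lemma ds_ext {p : Polynomial ℂ} {D1 D2 : Derivation ℂ (DS p) (DS p)}
    (hx : D1 (dsX p) = D2 (dsX p)) (hy : D1 (dsY p) = D2 (dsY p))
    (hz : D1 (dsZ p) = D2 (dsZ p)) : D1 = D2 := by
  refine Derivation.ext_of_adjoin_eq_top _ (ds_adjoin p) ?_
  rintro a (rfl | rfl | rfl) <;> assumption

lemma lie_smul_deriv {A : Type*} [CommRing A] [Algebra ℂ A] (a : A)
    (D E : Derivation ℂ A A) : ⁅D, a • E⁆ = D a • E + a • ⁅D, E⁆ := by
  ext b
  simp only [Derivation.commutator_apply, Derivation.smul_apply, Derivation.add_apply,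
    smul_eq_mul, Derivation.leibniz]
  ring

/-- for `n ≥ 1`,
`ad_V^n(W) = -(n-1)·y^(n-2)·p^(n)(z)·V + y^(n-1)·p^(n+1)(z)·H`. -/
theorem adV_iter_W (p : Polynomial ℂ)
    (V W H : Derivation ℂ (DS p) (DS p))
    (hVx : V (dsX p) = Polynomial.aeval (dsZ p) (derivative p))
    (hVy : V (dsY p) = 0) (hVz : V (dsZ p) = dsY p)
    (hWx : W (dsX p) = 0)
    (hWy : W (dsY p) = Polynomial.aeval (dsZ p) (derivative p))
    (hWz : W (dsZ p) = dsX p)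
    (hHx : H (dsX p) = -dsX p) (hHy : H (dsY p) = dsY p)
    (hHz : H (dsZ p) = 0) :
    ∀ n : ℕ, 1 ≤ n →
      (fun X => ⁅V, X⁆)^[n] W =
        ((-((n : ℂ) - 1)) • (dsY p ^ (n - 2) *
            Polynomial.aeval (dsZ p) ((fun q => derivative q)^[n] p))) • V +
        (dsY p ^ (n - 1) *
            Polynomial.aeval (dsZ p) ((fun q => derivative q)^[n+1] p)) • H := by
  set d : Polynomial ℂ → Polynomial ℂ := fun q => derivative q with hd
  set y : DS p := dsY p
  set P : ℕ → DS p := fun k => Polynomial.aeval (dsZ p) (d^[k] p) with hP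
  have mapP : ∀ (D : Derivation ℂ (DS p) (DS p)) (q : Polynomial ℂ),
      D (Polynomial.aeval (dsZ p) q) =
        Polynomial.aeval (dsZ p) (derivative q) * D (dsZ p) := fun D q => by
    rw [Derivation.map_aeval, smul_eq_mul]
  have hVP : ∀ k, V (P k) = P (k + 1) * y := fun k => by
    simp only [hP, mapP, hVz, Function.iterate_succ_apply']; rfl
  have hVpow : ∀ k, V (y ^ k) = 0 := fun k => by
    rw [Derivation.leibniz_pow, hVy]; simp
  have hVH : ⁅V, H⁆ = -V := by
    apply ds_ext <;>
      simp [Derivation.commutator_apply, hVx, hVy, hVz, hHx, hHy, hHz, mapP, map_neg, show dsY p = y from rfl]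
  have key : ∀ c g : DS p, ⁅V, c • V + g • H⁆ = (V c - g) • V + (V g) • H := by
    intro c g
    ext b
    have h2 : V (H b) - H (V b) = -V b := by
      simpa [Derivation.commutator_apply] using DFunLike.congr_fun hVH b
    simp only [Derivation.commutator_apply, Derivation.add_apply, Derivation.smul_apply,
      smul_eq_mul, Derivation.leibniz, map_add, sub_smul, Derivation.sub_apply]
    linear_combination g * h2
  suffices h : ∀ m : ℕ, (fun X => ⁅V, X⁆)^[m + 1] W =
      ((-(m : ℂ)) • (y ^ (m - 1) * P (m + 1))) • V + (y ^ m * P (m + 2)) • H by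
    intro n hn
    obtain ⟨m, rfl⟩ : ∃ m, n = m + 1 := ⟨n - 1, (Nat.succ_pred_eq_of_pos hn).symm⟩
    have e : (-(((m + 1 : ℕ) : ℂ) - 1)) = (-(m : ℂ)) := by push_cast; ring
    rw [e]
    exact h m
  intro m
  induction m with
  | zero =>
    simp only [zero_add, Function.iterate_one, Nat.cast_zero, neg_zero, zero_smul,
      zero_smul, zero_add, pow_zero, one_mul, Nat.zero_sub]
    apply ds_ext <;>
      simp [Derivation.commutator_apply, hVx, hVy, hVz, hWx, hWy, hWz, hHx, hHy, hHz,
        mapP, hP, hd, Function.iterate_succ_apply', mul_comm, mul_neg, neg_mul,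
          show dsY p = y from rfl] <;>
      ring
  | succ m ih =>
    rw [Function.iterate_succ_apply', ih, key]
    have hB : V (y ^ m * P (m + 2)) = y ^ (m + 1) * P (m + 1 + 2) := by
      rw [Derivation.leibniz, hVpow, hVP, smul_eq_mul, smul_eq_mul, pow_succ]
      ring
    have hA : V ((-(m : ℂ)) • (y ^ (m - 1) * P (m + 1))) - y ^ m * P (m + 2) =
        (-((m + 1 : ℕ) : ℂ)) • (y ^ (m + 1 - 1) * P (m + 1 + 1)) := by
      rw [Derivation.map_smul, Derivation.leibniz, hVpow, hVP, smul_eq_mul, smul_eq_mul]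
      cases m with
      | zero => simp
      | succ k =>
        simp only [Nat.add_sub_cancel, Algebra.smul_def, Nat.cast_add, Nat.cast_one,
          map_neg, map_add, map_one, map_natCast, mul_zero, add_zero, pow_succ]
        ring_nf
        module
    rw [hB, hA]
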